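/- arXiv:2604.08071 — 2 statements merged into one kernel-verified Lean document; each statement's English description precedes it below -/
import Mathlib

section
/- Let G be a bidirected graph without tips. If G has a cycloid with an exceptional vertex (i.e., a cycloid in which exactly one vertex fails sign alternation), then G has no feedback edge: for every edge e of G, the graph G − e still contains a cycloid. -/
/-!
Bidirected graphs.  A vertex-side is a vertex with a sign (`true` = `+`, `false` = `−`);
a bidirected edge is an unordered pair of vertex-sides (an element of `Sym2 (V × Bool)`).
-/

namespace Paper

variable {V : Type}

/-- A vertex-side: a vertex together with a sign (`true` = `+`, `false` = `−`). -/
abbrev Side (V : Type) := V × Bool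

/-- A bidirected graph on the vertex type `V`: a vertex set together with a set of
bidirected edges, each an unordered pair of vertex-sides with endpoints in `verts`. -/
structure BDGraph (V : Type) where
  verts : Set V
  E : Set (Sym2 (Side V))
  wf : ∀ e ∈ E, ∀ x ∈ e, Prod.fst x ∈ verts

namespace BDGraph

/-- `(u, α)` is a vertex-side of `G`, i.e. some edge of `G` is incident to `u`
with sign `α`. -/
def HasSide (G : BDGraph V) (u : V) (α : Bool) : Prop :=
  ∃ e ∈ G.E, (u, α) ∈ e

/-- Adjacency in the underlying undirected graph `U(G)` (signs ignored). -/
def uadj (G : BDGraph V) (a b : V) : Prop :=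
  ∃ e ∈ G.E, ∃ σ τ : Bool, e = s((a, σ), (b, τ))

/-- Connectivity (reachability) in the underlying undirected graph `U(G)`. -/
def uReach (G : BDGraph V) (a b : V) : Prop :=
  Relation.ReflTransGen G.uadj a b

/-- `v` is a tip of `G`: no two edges of `G` are incident to `v` with different signs. -/
def IsTip (G : BDGraph V) (v : V) : Prop :=
  ∀ e ∈ G.E, ∀ f ∈ G.E, ∀ σ : Bool, (v, σ) ∈ e → (v, !σ) ∈ f → False

/-- `v` is a tip of `G` with sign `α`: every edge of `G` incident to `v` carries the
sign `α` at `v`. -/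
def IsTipWith (G : BDGraph V) (v : V) (α : Bool) : Prop :=
  ∀ e ∈ G.E, ∀ σ : Bool, (v, σ) ∈ e → σ = α

/-- Deletion of the vertex `x` (and all edges incident to it). -/
def deleteVert (G : BDGraph V) (x : V) : BDGraph V where
  verts := G.verts \ {x}
  E := {e | e ∈ G.E ∧ ∀ y : Side V, y ∈ e → y.1 ≠ x}
  wf := by
    rintro e ⟨he, hne⟩ y hy
    exact ⟨G.wf e he y hy, hne y hy⟩

/-- Deletion of a single edge. -/
def deleteEdge (G : BDGraph V) (e₀ : Sym2 (Side V)) : BDGraph V where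
  verts := G.verts
  E := G.E \ {e₀}
  wf := by
    rintro e ⟨he, -⟩ y hy
    exact G.wf e he y hy

/-- `x` is a cutvertex of (the underlying undirected graph of) `G`: some two other
vertices are connected in `G` but no longer connected after deleting `x`. -/
def IsCutvertex (G : BDGraph V) (x : V) : Prop :=
  x ∈ G.verts ∧ ∃ a ∈ G.verts, ∃ b ∈ G.verts, a ≠ x ∧ b ≠ x ∧
    G.uReach a b ∧ ¬ (G.deleteVert x).uReach a b

/-- `G` is connected (underlying undirected graph, nonempty). -/
def Conn (G : BDGraph V) : Prop :=
  G.verts.Nonempty ∧ ∀ a ∈ G.verts, ∀ b ∈ G.verts, G.uReach a b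

/-- `H` is a subgraph of `G`. -/
def IsSubgraphOf (H G : BDGraph V) : Prop :=
  H.verts ⊆ G.verts ∧ H.E ⊆ G.E

end BDGraph

/-! ### Splitting a pair of vertex-sides

Splitting the vertex-side `u α` detaches all edges incident to `u` with the opposite
sign `!α` and reattaches them to a new vertex `u'`.  We split the two vertex-sides
`u α` and `v β` (`u ≠ v`) simultaneously, realising the two new vertices as `Sum.inr u`
and `Sum.inr v` in the vertex type `V ⊕ V` (original vertices are `Sum.inl`). -/

open Classical in
/-- Where each vertex-side goes under the splitting of `u α` and `v β`. -/
noncomputable def splitMap (u : V) (α : Bool) (v : V) (β : Bool) :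
    Side V → Side (V ⊕ V) :=
  fun x =>
    if x = (u, !α) then (Sum.inr u, !α)
    else if x = (v, !β) then (Sum.inr v, !β)
    else (Sum.inl x.1, x.2)

/-- The graph obtained from `G` by splitting the vertex-sides `u α` and `v β`. -/
noncomputable def BDGraph.split2 (G : BDGraph V) (u : V) (α : Bool) (v : V) (β : Bool) :
    BDGraph (V ⊕ V) where
  verts := (Sum.inl '' G.verts) ∪ {Sum.inr u, Sum.inr v}
  E := Sym2.map (splitMap u α v β) '' G.E
  wf := by
    rintro e ⟨f, hf, rfl⟩ x hx
    rw [Sym2.mem_map] at hx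
    obtain ⟨y, hy, rfl⟩ := hx
    by_cases h1 : y = (u, !α)
    · simp only [splitMap, if_pos h1]
      simp
    · by_cases h2 : y = (v, !β)
      · simp only [splitMap, if_neg h1, if_pos h2]
        simp
      · simp only [splitMap, if_neg h1, if_neg h2]
        exact Set.mem_union_left _ ⟨y.1, G.wf f hf y hy, rfl⟩

/-- The pair of vertex-sides `{u α, v β}` is separable in `G`: after splitting `u α`
and `v β`, there is a connected component containing `u` and `v` but neither of the
two new vertices `u'`, `v'`. -/
noncomputable def Separable (G : BDGraph V) (u : V) (α : Bool) (v : V) (β : Bool) : Prop :=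
  u ≠ v ∧
    (G.split2 u α v β).uReach (Sum.inl u) (Sum.inl v) ∧
    ¬ (G.split2 u α v β).uReach (Sum.inl u) (Sum.inr u) ∧
    ¬ (G.split2 u α v β).uReach (Sum.inl u) (Sum.inr v) ∧
    ¬ (G.split2 u α v β).uReach (Sum.inl v) (Sum.inr u) ∧
    ¬ (G.split2 u α v β).uReach (Sum.inl v) (Sum.inr v)

/-- The vertex set of the snarl component of `{u α, v β}`: the vertices of `G` lying in
the connected component of `u` after splitting `u α` and `v β`. -/
noncomputable def SnarlVerts (G : BDGraph V) (u : V) (α : Bool) (v : V) (β : Bool) :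
    Set V :=
  {w | (G.split2 u α v β).uReach (Sum.inl u) (Sum.inl w)}

/-- The edge set of the snarl component of `{u α, v β}`: the edges of `G` lying (after
splitting) in the connected component of `u`. -/
noncomputable def SnarlEdges (G : BDGraph V) (u : V) (α : Bool) (v : V) (β : Bool) :
    Set (Sym2 (Side V)) :=
  {e | e ∈ G.E ∧ ∀ y : Side V, y ∈ e →
      (G.split2 u α v β).uReach (Sum.inl u) (splitMap u α v β y).1}

/-- `{u α, v β}` is a snarl of `G`: separable, and minimal in the sense that the snarl
component `X` contains no vertex `w ∉ {u,v}` with vertex-sides `w γ`, `w !γ` such that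
`{u α, w γ}` and `{w !γ, v β}` are both separable in `G`. -/
noncomputable def IsSnarl (G : BDGraph V) (u : V) (α : Bool) (v : V) (β : Bool) : Prop :=
  Separable G u α v β ∧
    ¬ ∃ w ∈ SnarlVerts G u α v β, w ≠ u ∧ w ≠ v ∧
        ∃ γ : Bool, Separable G u α w γ ∧ Separable G w (!γ) v β

/-! ### Sign-consistent cutvertices and sign-cut graphs -/

/-- A cutvertex `x` of `G` is sign-consistent if `x` is a tip in `G[V(C) ∪ {x}]` for
every connected component `C` of `G − x` (components are described by a member `a`). -/
def BDGraph.SignConsistent (G : BDGraph V) (x : V) : Prop :=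
  G.IsCutvertex x ∧
    ∀ a ∈ (G.deleteVert x).verts,
      ∀ e ∈ G.E, ∀ f ∈ G.E,
        (∀ y : Side V, y ∈ e → y.1 = x ∨ (G.deleteVert x).uReach a y.1) →
        (∀ y : Side V, y ∈ f → y.1 = x ∨ (G.deleteVert x).uReach a y.1) →
        ∀ σ τ : Bool, (x, σ) ∈ e → (x, τ) ∈ f → σ = τ

open Classical in
/-- After splitting every sign-consistent vertex of `G` and relabelling, the two copies
of a sign-consistent vertex `x` are identified with the pairs `(x, true)`, `(x, false)`;
any other vertex `w` is identified with `(w, true)`.  `scKey G` sends a vertex-side to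
the copy of its vertex that it is attached to. -/
noncomputable def scKey (G : BDGraph V) : Side V → Side V :=
  fun x => if G.SignConsistent x.1 then x else (x.1, true)

lemma scKey_fst (G : BDGraph V) (y : Side V) : (scKey G y).1 = y.1 := by
  unfold scKey
  split <;> rfl

lemma scKey_idem (G : BDGraph V) (y : Side V) : scKey G (scKey G y) = scKey G y := by
  by_cases h : G.SignConsistent y.1
  · simp [scKey, h]
  · simp [scKey, h]

/-- The graph obtained from `G` by simultaneously splitting all sign-consistent
vertices (on the vertex type `V × Bool`, cf. `scKey`). -/
noncomputable def BDGraph.splitAll (G : BDGraph V) : BDGraph (Side V) where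
  verts := {p : Side V | p.1 ∈ G.verts ∧ scKey G p = p}
  E := Sym2.map (fun y : Side V => (scKey G y, y.2)) '' G.E
  wf := by
    rintro e ⟨f, hf, rfl⟩ x hx
    rw [Sym2.mem_map] at hx
    obtain ⟨y, hy, rfl⟩ := hx
    show (scKey G y).1 ∈ G.verts ∧ scKey G (scKey G y) = scKey G y
    exact ⟨by rw [scKey_fst]; exact G.wf f hf y hy, scKey_idem G y⟩

/-- `F` is a sign-cut graph of `G`: one of the graphs obtained by splitting every
sign-consistent vertex of `G` and relabelling each new vertex `y'` back to `y`;
concretely, the subgraph of `G` corresponding to a connected component of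
`G.splitAll`. -/
noncomputable def IsSignCutGraph (G F : BDGraph V) : Prop :=
  ∃ p ∈ G.splitAll.verts,
    F.verts = {w : V | ∃ σ : Bool, (w, σ) ∈ G.splitAll.verts ∧
                  G.splitAll.uReach p (w, σ)} ∧
    F.E = {e | e ∈ G.E ∧ ∀ y : Side V, y ∈ e → G.splitAll.uReach p (scKey G y)}

/-! ### Blocks -/

/-- `H` is a block of `G`: a maximal connected subgraph of `G` without a cutvertex. -/
def IsBlock (G H : BDGraph V) : Prop :=
  H.IsSubgraphOf G ∧ H.Conn ∧ (∀ x, ¬ H.IsCutvertex x) ∧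
    ∀ H' : BDGraph V, H'.IsSubgraphOf G → H.IsSubgraphOf H' → H'.Conn →
      (∀ x, ¬ H'.IsCutvertex x) → H'.verts = H.verts ∧ H'.E = H.E

/-- `H'` is a dangling block of `v` with respect to the block `H`:
a block of `G` different from `H` containing `v` with vertex-sides of opposite
signs at `v`. -/
def IsDanglingBlock (G H : BDGraph V) (v : V) (H' : BDGraph V) : Prop :=
  IsBlock G H' ∧ ¬ (H'.verts = H.verts ∧ H'.E = H.E) ∧ v ∈ H'.verts ∧
    H'.HasSide v true ∧ H'.HasSide v false

/-- `{u,v}` is a separation pair of `H`: some two other vertices of `H` are connected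
in `H` but no longer connected after removing `u` and `v`. -/
def IsSepPairB (H : BDGraph V) (u v : V) : Prop :=
  ∃ a ∈ H.verts, ∃ b ∈ H.verts, a ≠ u ∧ a ≠ v ∧ b ≠ u ∧ b ≠ v ∧
    H.uReach a b ∧ ¬ ((H.deleteVert u).deleteVert v).uReach a b

/-- `{u,v}` is a split pair of `H`: a separation pair of `H` or an edge of `H`. -/
def IsSplitPairB (H : BDGraph V) (u v : V) : Prop :=
  IsSepPairB H u v ∨ ∃ e ∈ H.E, ∃ σ τ : Bool, e = s((u, σ), (v, τ))

/-! ### Bidirected walks, paths and cycloids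

A bidirected walk `{v₁ α₁, v₂ α̂₂}, {v₂ α₂, v₃ α̂₃}, …` is encoded by the list
`[(v₁, α₁), (v₂, α₂), …]` of its *departing* sides: the first entry `(v₁, α₁)` is the
side of `v₁` on the first edge, and for `i ≥ 2` the walk arrives at `vᵢ` with sign
`!αᵢ` and departs with sign `αᵢ` (so the sign alternates at every internal vertex). -/

/-- One step of a bidirected walk, between consecutive departing sides. -/
def BStep (G : BDGraph V) (x y : Side V) : Prop :=
  s(x, (y.1, !y.2)) ∈ G.E

/-- `p` encodes a bidirected walk of `G` (at least one edge). -/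
def IsBWalk (G : BDGraph V) (p : List (Side V)) : Prop :=
  2 ≤ p.length ∧ p.Chain' (BStep G)

/-- `p` encodes a `u α`-`v β` bidirected path of `G`: a bidirected walk without
repeated vertices which starts at `u` with sign `α` and arrives at `v` with sign `β`
(so the last departing side recorded is `(v, !β)`). -/
def IsBPath (G : BDGraph V) (p : List (Side V)) (u : V) (α : Bool) (v : V) (β : Bool) :
    Prop :=
  IsBWalk G p ∧ p.head? = some (u, α) ∧ p.getLast? = some (v, !β) ∧
    (p.map Prod.fst).Nodup

/-- `G` has a cycloid: a closed bidirected walk through pairwise distinct vertices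
whose sign alternates at every vertex, except possibly at one (exceptional) vertex,
which we may take to be the starting vertex.  The closing edge either alternates at
the start vertex (`s(y, (x.1, !x.2))`) or fails to alternate there (`s(y, x)`). -/
def HasCycloid (G : BDGraph V) : Prop :=
  ∃ p : List (Side V), p ≠ [] ∧ (p.map Prod.fst).Nodup ∧ p.Chain' (BStep G) ∧
    ∃ x y : Side V, p.head? = some x ∧ p.getLast? = some y ∧
      (s(y, (x.1, !x.2)) ∈ G.E ∨ s(y, x) ∈ G.E)

/-- `G` has a cycloid with an exceptional vertex: exactly one vertex (the starting
one, after rotation) fails sign alternation. -/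
def HasExceptionalCycloid (G : BDGraph V) : Prop :=
  ∃ p : List (Side V), p ≠ [] ∧ (p.map Prod.fst).Nodup ∧ p.Chain' (BStep G) ∧
    ∃ x y : Side V, p.head? = some x ∧ p.getLast? = some y ∧ s(y, x) ∈ G.E

/-! ### Flipping a vertex -/

open Classical in
/-- Flip the sign of every vertex-side of `u`. -/
noncomputable def flipSide (u : V) : Side V → Side V :=
  fun x => if x.1 = u then (x.1, !x.2) else x

/-- The graph obtained from `G` by flipping the vertex `u` (every positive vertex-side
of `u` becomes negative and vice versa). -/
noncomputable def BDGraph.flip (G : BDGraph V) (u : V) : BDGraph V where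
  verts := G.verts
  E := Sym2.map (flipSide u) '' G.E
  wf := by
    rintro e ⟨f, hf, rfl⟩ x hx
    rw [Sym2.mem_map] at hx
    obtain ⟨y, hy, rfl⟩ := hx
    have h1 : (flipSide u y).1 = y.1 := by
      unfold flipSide
      split <;> rfl
    rw [h1]
    exact G.wf f hf y hy


/-! ### Auxiliary machinery for Statement 18 -/

section Stmt18Aux

open List

/-- Flip the sign of a vertex-side. -/
def sflip : Side V → Side V := fun q => (q.1, !q.2)

/-- Reverse a bidirected walk (given by its departing sides). -/
def flipW (l : List (Side V)) : List (Side V) := (l.map sflip).reverse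

lemma mem_of_getLast?0 {α : Type*} {l : List α} {a : α} (h : l.getLast? = some a) :
    a ∈ l := by
  rw [← List.head?_reverse] at h
  have : a ∈ l.reverse := by
    cases hl : l.reverse with
    | nil => rw [hl] at h; simp at h
    | cons b t =>
      rw [hl] at h
      simp only [head?_cons, Option.some.injEq] at h
      rw [← h]; exact mem_cons_self
  exact List.mem_reverse.mp this

lemma getLast?_cons_some {α : Type*} (b : α) (m2 : List α) :
    ∃ l', (b :: m2).getLast? = some l' := by
  induction m2 generalizing b with
  | nil => exact ⟨b, rfl⟩
  | cons c t ih => rw [List.getLast?_cons_cons]; exact ih c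

lemma head?_append_some {α : Type*} {A B : List α} {a : α} (h : A.head? = some a) :
    (A ++ B).head? = some a := by
  cases A with
  | nil => simp at h
  | cons c t => simpa using h

lemma getLast?_append_some {α : Type*} {A B : List α} {b : α} (h : B.getLast? = some b) :
    (A ++ B).getLast? = some b := by
  rw [List.getLast?_append, h]; rfl

lemma getLast?_map' {α β : Type*} (f : α → β) (l : List α) :
    (l.map f).getLast? = l.getLast?.map f := by
  rw [← List.head?_reverse, ← List.map_reverse, List.head?_map, List.head?_reverse]

lemma chain'_iff_consec {α : Type*} {R : α → α → Prop} :
    ∀ {l : List α}, l.Chain' R ↔ ∀ m1 (a b : α) m2, l = m1 ++ a :: b :: m2 → R a b := by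
  intro l
  induction l with
  | nil =>
    constructor
    · intro _ m1 a b m2 h; exact absurd h (by simp)
    · intro _; exact List.isChain_nil
  | cons c t ih =>
    constructor
    · intro h m1 a b m2 he
      cases m1 with
      | nil =>
        simp only [List.nil_append] at he
        injection he with h1 h2
        subst h1; subst h2
        exact (List.isChain_cons_cons.mp h).1
      | cons d m1' =>
        injection he with h1 h2
        subst h2
        exact ih.mp (List.isChain_cons.mp h).2 m1' a b m2 rfl
    · intro h
      cases t with
      | nil => exact List.isChain_singleton _
      | cons b t' =>
        refine List.isChain_cons_cons.mpr ?_
        exact ⟨h [] c b t' rfl,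
          ih.mpr (fun m1 a b' m2 he => h (c :: m1) a b' m2 (by simp [he]))⟩

lemma bstep_flip (H : BDGraph V) {a b : Side V} (h : BStep H a b) :
    BStep H (sflip b) (sflip a) := by
  have h' : s((b.1, !b.2), a) ∈ H.E := by
    rw [Sym2.eq_swap]; exact h
  show s((b.1, !b.2), (a.1, !!a.2)) ∈ H.E
  rw [Bool.not_not, Prod.mk.eta]
  exact h'

lemma chain'_flipW (H : BDGraph V) {l : List (Side V)} (h : l.Chain' (BStep H)) :
    (flipW l).Chain' (BStep H) := by
  unfold flipW
  refine List.isChain_reverse.mpr ((List.isChain_map _).mpr ?_)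
  exact h.imp fun a b hab => bstep_flip H hab

lemma map_fst_flipW (l : List (Side V)) :
    (flipW l).map Prod.fst = (l.map Prod.fst).reverse := by
  unfold flipW
  rw [List.map_reverse, List.map_map]
  rfl

lemma head?_flipW (l : List (Side V)) : (flipW l).head? = l.getLast?.map sflip := by
  unfold flipW
  rw [List.head?_reverse, getLast?_map']

lemma getLast?_flipW (l : List (Side V)) : (flipW l).getLast? = l.head?.map sflip := by
  unfold flipW
  rw [List.getLast?_reverse, List.head?_map]

end Stmt18Aux
section Stmt18Grow

open List

lemma grow (H : BDGraph V) (hfin : H.verts.Finite) (VC : Set V)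
    (hnt : ∀ v (s : Bool), v ∉ VC → H.HasSide v s → H.HasSide v (!s))
    (w0 : Side V) (n : ℕ) :
    ∀ (W : List (Side V)) (lst : Side V),
      W.head? = some w0 →
      W.getLast? = some lst →
      (∀ q ∈ W.tail, q.1 ∉ VC) →
      (W.map Prod.fst).Nodup →
      W.Chain' (BStep H) →
      H.HasSide lst.1 lst.2 →
      (H.verts \ {v | v ∈ W.map Prod.fst}).ncard ≤ n →
      HasCycloid H ∨
        ∃ (W' : List (Side V)) (lst' : Side V) (z : V) (δ : Bool),
          W'.head? = some w0 ∧ W'.getLast? = some lst' ∧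
          (∀ q ∈ W'.tail, q.1 ∉ VC) ∧ (W'.map Prod.fst).Nodup ∧
          W'.Chain' (BStep H) ∧ z ∈ VC ∧ s(lst', (z, δ)) ∈ H.E := by
  induction n using Nat.strong_induction_on with
  | _ n ih =>
  intro W lst hhead hlast htail hnd hch hdep hcard
  obtain ⟨Wt, rfl⟩ : ∃ Wt, W = w0 :: Wt := by
    cases W with
    | nil => simp at hhead
    | cons c t =>
      simp only [head?_cons, Option.some.injEq] at hhead
      exact ⟨t, by rw [hhead]⟩
  obtain ⟨g, hg, hmem⟩ := hdep
  obtain ⟨zd, hzd⟩ := Sym2.mem_iff_exists.mp hmem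
  have hglst : s(lst, zd) ∈ H.E := by rw [hzd] at hg; exact hg
  by_cases h1 : zd.1 = lst.1
  · -- a loop at the last vertex: immediate cycloid
    left
    refine ⟨[lst], by simp, by simp, List.isChain_singleton _, lst, lst, rfl, rfl, ?_⟩
    have hz : zd = (lst.1, zd.2) := by rw [← h1]
    by_cases h2 : zd.2 = lst.2
    · right
      rw [hz, h2] at hglst
      exact hglst
    · left
      have h2' : zd.2 = !lst.2 := by revert h2; cases zd.2 <;> cases lst.2 <;> simp
      rw [hz, h2'] at hglst
      exact hglst
  · by_cases h2 : zd.1 ∈ VC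
    · -- hit the cycloid: return the walk
      right
      exact ⟨w0 :: Wt, lst, zd.1, zd.2, hhead, hlast, htail, hnd, hch, h2, hglst⟩
    · by_cases h3 : zd.1 ∈ (w0 :: Wt).map Prod.fst
      · -- the walk revisits one of its own vertices: cycloid
        left
        obtain ⟨q, hqmem, hq1⟩ := List.mem_map.mp h3
        obtain ⟨A, B, hAB⟩ := List.append_of_mem hqmem
        obtain ⟨l2, hl2⟩ := getLast?_cons_some q B
        have hl2' : l2 = lst := by
          rw [hAB, List.getLast?_append, hl2] at hlast
          simpa using hlast
        refine ⟨q :: B, by simp, ?_, ?_, q, lst, rfl, by rw [← hl2', hl2], ?_⟩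
        · have hnd' := hnd
          rw [hAB, List.map_append] at hnd'
          exact (List.nodup_append.mp hnd').2.1
        · refine chain'_iff_consec.mpr fun m1 a b m2 he => ?_
          exact chain'_iff_consec.mp hch (A ++ m1) a b m2
            (by rw [hAB, he, List.append_assoc])
        · have hq : q = (zd.1, q.2) := by rw [← hq1]
          by_cases h4 : zd.2 = q.2
          · right
            rw [hq, ← h4]
            exact hglst
          · left
            have h4' : zd.2 = !q.2 := by revert h4; cases zd.2 <;> cases q.2 <;> simp
            rw [hq1, ← h4']
            exact hglst
      · -- fresh vertex: extend the walk
        have hzmem : zd ∈ g := by rw [hzd]; simp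
        have hzv : zd.1 ∈ H.verts := H.wf g hg zd hzmem
        set Wn : List (Side V) := (w0 :: Wt) ++ [(zd.1, !zd.2)] with hWn
        have hsub : (H.verts \ {v | v ∈ Wn.map Prod.fst}) ⊆
            (H.verts \ {v | v ∈ (w0 :: Wt).map Prod.fst}) := by
          intro vv hv
          exact ⟨hv.1, fun hm => hv.2 (by rw [hWn, List.map_append]; exact mem_append_left _ hm)⟩
        have hssub : (H.verts \ {v | v ∈ Wn.map Prod.fst}) ⊂
            (H.verts \ {v | v ∈ (w0 :: Wt).map Prod.fst}) := by
          refine ⟨hsub, fun hba => ?_⟩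
          have hz1 : zd.1 ∈ H.verts \ {v | v ∈ (w0 :: Wt).map Prod.fst} := ⟨hzv, h3⟩
          have := hba hz1
          exact this.2 (by rw [hWn, List.map_append]; simp)
        have hcard' : (H.verts \ {v | v ∈ Wn.map Prod.fst}).ncard <
            (H.verts \ {v | v ∈ (w0 :: Wt).map Prod.fst}).ncard :=
          Set.ncard_lt_ncard hssub (hfin.subset Set.diff_subset)
        have hnn : (H.verts \ {v | v ∈ Wn.map Prod.fst}).ncard < n :=
          lt_of_lt_of_le hcard' hcard
        refine ih _ hnn Wn (zd.1, !zd.2) ?_ List.getLast?_concat ?_ ?_ ?_ ?_ le_rfl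
        · rw [hWn, List.cons_append]; rfl
        · intro q hq
          rw [hWn, List.cons_append, List.tail_cons] at hq
          rcases List.mem_append.mp hq with hq' | hq'
          · exact htail q hq'
          · have : q = (zd.1, !zd.2) := by simpa using hq'
            rw [this]; exact h2
        · rw [hWn, List.map_append]
          refine List.nodup_append'.mpr ⟨hnd, by simp, ?_⟩
          intro vv hv1 hv2
          simp only [List.map_cons, List.map_nil, List.mem_singleton] at hv2
          rw [hv2] at hv1
          exact h3 hv1
        · rw [hWn]
          refine List.isChain_append.mpr ⟨hch, List.isChain_singleton _, ?_⟩
          intro xx hxx yy hyy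
          rw [hlast] at hxx
          simp only [Option.mem_def, Option.some.injEq] at hxx
          simp only [head?_cons, Option.mem_def, Option.some.injEq] at hyy
          rw [← hxx, ← hyy]
          show s(lst, (zd.1, !!zd.2)) ∈ H.E
          rw [Bool.not_not, Prod.mk.eta]
          exact hglst
        · exact hnt zd.1 zd.2 h2 ⟨g, hg, hzmem⟩

end Stmt18Grow
section Stmt18Close

open List

lemma close_up (H : BDGraph V) (hfin : H.verts.Finite) (VC : Set V) (x : Side V)
    (hnt : ∀ v (s : Bool), v ∉ VC → H.HasSide v s → H.HasSide v (!s))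
    (hxVC : x.1 ∈ VC) (hstart : H.HasSide x.1 (!x.2))
    (hQ : ∀ z ∈ VC, z ≠ x.1 → ∃ (Q : List (Side V)) (sz : Bool),
        Q.head? = some x ∧ Q.getLast? = some (z, sz) ∧ Q.Chain' (BStep H) ∧
        (Q.map Prod.fst).Nodup ∧ ∀ q ∈ Q, q.1 ∈ VC) :
    HasCycloid H := by
  have h0 := grow H hfin VC hnt (x.1, !x.2)
      ((H.verts \ {v | v ∈ ([(x.1, !x.2)] : List (Side V)).map Prod.fst}).ncard)
      [(x.1, !x.2)] (x.1, !x.2) rfl rfl (by simp) (by simp) (List.isChain_singleton _) hstart le_rfl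
  rcases h0 with h | ⟨W, lst, z, δ, hWh, hWl, hWt, hWnd, hWch, hzVC, hedge⟩
  · exact h
  obtain ⟨Wt, rfl⟩ : ∃ Wt, W = (x.1, !x.2) :: Wt := by
    cases W with
    | nil => simp at hWh
    | cons c t =>
      simp only [head?_cons, Option.some.injEq] at hWh
      exact ⟨t, by rw [hWh]⟩
  by_cases hzx : z = x.1
  · refine ⟨(x.1, !x.2) :: Wt, by simp, hWnd, hWch, (x.1, !x.2), lst, rfl, hWl, ?_⟩
    by_cases hδ : δ = x.2
    · left
      show s(lst, (x.1, !!x.2)) ∈ H.E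
      rw [Bool.not_not]
      rw [hzx, hδ] at hedge
      exact hedge
    · right
      have hδ' : δ = !x.2 := by revert hδ; cases δ <;> cases x.2 <;> simp
      rw [hzx, hδ'] at hedge
      exact hedge
  · obtain ⟨Q, sz, hQh, hQl, hQch, hQnd, hQVC⟩ := hQ z hzVC hzx
    have hQne : Q ≠ [] := by intro h; rw [h] at hQh; simp at hQh
    have hfh : (flipW Q).head? = some (z, !sz) := by
      rw [head?_flipW, hQl]; rfl
    have hfl : (flipW Q).getLast? = some (x.1, !x.2) := by
      rw [getLast?_flipW, hQh]; rfl
    refine ⟨flipW Q ++ Wt, ?_, ?_, ?_, (z, !sz), lst, head?_append_some hfh, ?_, ?_⟩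
    · intro h
      obtain ⟨h1, -⟩ := List.append_eq_nil_iff.mp h
      unfold flipW at h1
      rw [List.reverse_eq_nil_iff, List.map_eq_nil_iff] at h1
      exact hQne h1
    · rw [List.map_append, map_fst_flipW]
      refine List.nodup_append'.mpr ⟨List.nodup_reverse.mpr hQnd, ?_, ?_⟩
      · have := hWnd
        rw [List.map_cons] at this
        exact (List.nodup_cons.mp this).2
      · intro vv hv1 hv2
        have hv1' : vv ∈ Q.map Prod.fst := List.mem_reverse.mp hv1
        obtain ⟨q0, hq0, hq0'⟩ := List.mem_map.mp hv1'
        obtain ⟨q1, hq1, hq1'⟩ := List.mem_map.mp hv2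
        have : vv ∈ VC := hq0' ▸ hQVC q0 hq0
        exact hWt q1 hq1 (hq1'.symm ▸ this)
    · refine List.isChain_append.mpr ⟨chain'_flipW H hQch, (List.isChain_cons.mp hWch).2, ?_⟩
      intro xx hxx yy hyy
      rw [hfl] at hxx
      simp only [Option.mem_def, Option.some.injEq] at hxx
      rw [← hxx]
      exact (List.isChain_cons.mp hWch).1 yy hyy
    · cases Wt with
      | nil =>
        rw [List.append_nil, hfl]
        have : (x.1, !x.2) = lst := by simpa using hWl
        rw [← this]
      | cons c t =>
        refine getLast?_append_some ?_
        rw [List.getLast?_cons_cons] at hWl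
        exact hWl
    · by_cases hδ : δ = sz
      · left
        show s(lst, (z, !!sz)) ∈ H.E
        rw [Bool.not_not, ← hδ]
        exact hedge
      · right
        have hδ' : δ = !sz := by revert hδ; cases δ <;> cases sz <;> simp
        rw [← hδ']
        exact hedge

end Stmt18Close
section Stmt18Ne

open List

lemma getLast?_append_consec {α : Type*} {p m1 m2 : List α} {a b y : α}
    (hly : p.getLast? = some y) (hp : p = m1 ++ a :: b :: m2) : y ∈ b :: m2 := by
  obtain ⟨l', hl'⟩ := getLast?_cons_some b m2
  have : p.getLast? = some l' := by
    rw [hp]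
    refine getLast?_append_some ?_
    rw [List.getLast?_cons_cons]
    exact hl'
  rw [hly] at this
  injection this with h
  rw [h]
  exact mem_of_getLast?0 hl'

lemma step_ne_closing {p : List (Side V)} {x y : Side V}
    (hnd : (p.map Prod.fst).Nodup) (hhx : p.head? = some x) (hly : p.getLast? = some y) :
    ∀ m1 (a b : Side V) m2, p = m1 ++ a :: b :: m2 → s(a, (b.1, !b.2)) ≠ s(y, x) := by
  intro m1 a b m2 hp heq
  rw [Sym2.eq_iff] at heq
  have hyb : y ∈ b :: m2 := getLast?_append_consec hly hp
  have hnd' := hnd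
  rw [hp, List.map_append] at hnd'
  have hnd2 := (List.nodup_append.mp hnd').2.1
  rw [List.map_cons] at hnd2
  rcases heq with ⟨hay, -⟩ | ⟨hax, hby⟩
  · -- a = y, but y lies strictly after a
    have : a.1 ∈ (b :: m2).map Prod.fst := List.mem_map.mpr ⟨y, hyb, by rw [hay]⟩
    exact (List.nodup_cons.mp hnd2).1 this
  · -- a = x
    obtain ⟨pt, rfl⟩ : ∃ pt, p = x :: pt := by
      cases p with
      | nil => simp at hhx
      | cons c t =>
        simp only [head?_cons, Option.some.injEq] at hhx
        exact ⟨t, by rw [hhx]⟩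
    cases m1 with
    | cons c m1' =>
      injection hp with h1 h2
      have hmem : a ∈ pt := by rw [h2]; simp
      have : x.1 ∈ pt.map Prod.fst := List.mem_map.mpr ⟨a, hmem, by rw [hax]⟩
      rw [List.map_cons] at hnd
      exact (List.nodup_cons.mp hnd).1 this
    | nil =>
      simp only [List.nil_append] at hp
      injection hp with h1 h2
      rcases List.mem_cons.mp hyb with h | hym2
      · -- y = b and y = (b.1, !b.2): impossible signs
        have := (hby.trans h).symm
        have h2' := congrArg Prod.snd this
        simp at h2'
      · -- y strictly after b but sharing b's vertex
        have hnd3 : ((b :: m2).map Prod.fst).Nodup := by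
          rw [List.map_cons] at hnd
          rw [← h2]
          exact (List.nodup_cons.mp hnd).2
        rw [List.map_cons] at hnd3
        have hb1 : b.1 ∈ m2.map Prod.fst := by
          refine List.mem_map.mpr ⟨y, hym2, ?_⟩
          have := congrArg Prod.fst hby
          simpa using this.symm
        exact (List.nodup_cons.mp hnd3).1 hb1

lemma step_ne_e_left {p L1 L2 : List (Side V)} {u v : Side V}
    (hnd : (p.map Prod.fst).Nodup) (hp : p = L1 ++ u :: v :: L2) :
    ∀ m1 (a b : Side V) m2, L1 ++ [u] = m1 ++ a :: b :: m2 →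
      s(a, (b.1, !b.2)) ≠ s(u, (v.1, !v.2)) := by
  intro m1 a b m2 he heq
  rw [Sym2.eq_iff] at heq
  have hpz : p = (L1 ++ [u]) ++ v :: L2 := by rw [hp, List.append_assoc]; rfl
  have hnd' := hnd
  rw [hpz, List.map_append] at hnd'
  obtain ⟨hnd1, hnd2, hdisj⟩ := List.nodup_append'.mp hnd'
  have humem : u ∈ b :: m2 := getLast?_append_consec (List.getLast?_concat (l := L1)) he
  rcases heq with ⟨hau, -⟩ | ⟨hav, -⟩
  · -- a = u, but u lies strictly after a in L1 ++ [u]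
    have hnd1' := hnd1
    rw [he, List.map_append, List.map_cons] at hnd1'
    have := (List.nodup_append.mp hnd1').2.1
    have hmem : a.1 ∈ (b :: m2).map Prod.fst := List.mem_map.mpr ⟨u, humem, by rw [hau]⟩
    exact (List.nodup_cons.mp this).1 hmem
  · -- a = (v.1, !v.2): a is in the left part, v in the right part
    have hamem : a ∈ L1 ++ [u] := by rw [he]; simp
    have h1 : a.1 ∈ (L1 ++ [u]).map Prod.fst := List.mem_map.mpr ⟨a, hamem, rfl⟩
    have h2 : a.1 ∈ (v :: L2).map Prod.fst := by
      rw [List.map_cons]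
      have := congrArg Prod.fst hav
      simp only at this
      rw [this]
      exact mem_cons_self
    exact hdisj h1 h2

lemma step_ne_e_right {p L1 L2 : List (Side V)} {u v : Side V}
    (hnd : (p.map Prod.fst).Nodup) (hp : p = L1 ++ u :: v :: L2) :
    ∀ m1 (a b : Side V) m2, v :: L2 = m1 ++ a :: b :: m2 →
      s(a, (b.1, !b.2)) ≠ s(u, (v.1, !v.2)) := by
  intro m1 a b m2 he heq
  rw [Sym2.eq_iff] at heq
  have hpz : p = (L1 ++ [u]) ++ v :: L2 := by rw [hp, List.append_assoc]; rfl
  have hnd' := hnd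
  rw [hpz, List.map_append] at hnd'
  obtain ⟨hnd1, hnd2, hdisj⟩ := List.nodup_append'.mp hnd'
  have hamem : a ∈ v :: L2 := by rw [he]; simp
  rcases heq with ⟨hau, -⟩ | ⟨hav, -⟩
  · -- a = u: u is in the left part, a in the right part
    have h1 : a.1 ∈ (L1 ++ [u]).map Prod.fst := by
      refine List.mem_map.mpr ⟨u, by simp, by rw [hau]⟩
    have h2 : a.1 ∈ (v :: L2).map Prod.fst := List.mem_map.mpr ⟨a, hamem, rfl⟩
    exact hdisj h1 h2
  · -- a = (v.1, !v.2)
    rw [List.map_cons] at hnd2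
    rcases List.mem_cons.mp hamem with h | haL2
    · -- a = v: sign contradiction
      have := hav.symm.trans h
      have h2' := congrArg Prod.snd this
      simp at h2'
    · have : v.1 ∈ L2.map Prod.fst := by
        refine List.mem_map.mpr ⟨a, haL2, ?_⟩
        have := congrArg Prod.fst hav
        simpa using this
      exact (List.nodup_cons.mp hnd2).1 this

lemma hasSide_deleteEdge (G : BDGraph V) (e : Sym2 (Side V))
    (hnotip : ∀ v ∈ G.verts, ¬ G.IsTip v) (v : V) (t : Bool)
    (hvG : v ∈ G.verts) (hve : ((v, t) : Side V) ∉ e) :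
    (G.deleteEdge e).HasSide v t := by
  have hex : ∃ g', g' ∈ G.E ∧ (v, t) ∈ g' := by
    by_contra hno
    push_neg at hno
    refine hnotip v hvG (fun e1 he1 f hf σ h1 h2 => ?_)
    by_cases hσ : σ = t
    · rw [hσ] at h1; exact hno e1 he1 h1
    · have hσ' : (!σ) = t := by revert hσ; cases σ <;> cases t <;> simp
      rw [hσ'] at h2
      exact hno f hf h2
  obtain ⟨g', hg', hm⟩ := hex
  exact ⟨g', ⟨hg', fun hh => hve (by rwa [Set.mem_singleton_iff.mp hh] at hm)⟩, hm⟩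

end Stmt18Ne
/-- Let `G` be a (finite) bidirected graph without tips.  If `G` has
a cycloid with an exceptional vertex, then `G` has no feedback edge: for every edge
`e` of `G`, the graph `G − e` still contains a cycloid. -/
theorem statement_18 (G : BDGraph V) (hfin : G.verts.Finite)
    (hnotip : ∀ v ∈ G.verts, ¬ G.IsTip v)
    (hc : HasExceptionalCycloid G) :
    ∀ e ∈ G.E, HasCycloid (G.deleteEdge e) := by
  classical
  obtain ⟨p, hpne, hnd, hch, x, y, hhx, hly, hyx⟩ := hc
  intro e he
  have hconsecG : ∀ m1 (a b : Side V) m2, p = m1 ++ a :: b :: m2 →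
      s(a, (b.1, !b.2)) ∈ G.E :=
    fun m1 a b m2 hp => chain'_iff_consec.mp hch m1 a b m2 hp
  obtain ⟨pt, rfl⟩ : ∃ pt, p = x :: pt := by
    cases p with
    | nil => simp at hhx
    | cons c t =>
      simp only [List.head?_cons, Option.some.injEq] at hhx
      exact ⟨t, by rw [hhx]⟩
  set VC : Set V := {vv | vv ∈ (x :: pt).map Prod.fst} with hVC
  have hxVC : x.1 ∈ VC := by simp [hVC]
  have hyMem : y ∈ x :: pt := mem_of_getLast?0 hly
  have hxG : x.1 ∈ G.verts := G.wf _ hyx x (by simp)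
  have hyne : y ≠ (x.1, !x.2) := by
    intro hcon
    rcases List.mem_cons.mp hyMem with h | h
    · rw [hcon] at h
      have := congrArg Prod.snd h
      simp at this
    · rw [List.map_cons] at hnd
      refine (List.nodup_cons.mp hnd).1 ?_
      refine List.mem_map.mpr ⟨y, h, ?_⟩
      rw [hcon]
  by_cases hB : ∃ (L1 : List (Side V)) (u v : Side V) (L2 : List (Side V)),
      (x :: pt : List (Side V)) = L1 ++ u :: v :: L2 ∧ e = s(u, (v.1, !v.2))
  · -- `e` is a chain edge of the cycloid
    obtain ⟨L1, u, v, L2, hp, heB⟩ := hB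
    have hpz : (x :: pt : List (Side V)) = (L1 ++ [u]) ++ v :: L2 := by
      rw [hp, List.append_assoc]; rfl
    obtain ⟨R1, hR1⟩ : ∃ R1, L1 ++ [u] = x :: R1 := by
      cases hLu : L1 ++ [u] with
      | nil => simp at hLu
      | cons c R1 =>
        rw [hLu] at hpz
        injection hpz with h1 h2
        exact ⟨R1, by rw [← h1]⟩
    have hpt : pt = R1 ++ v :: L2 := by
      rw [hR1] at hpz
      injection hpz with h1 h2
    have hvpt : v ∈ pt := by rw [hpt]; simp
    have heVC : ∀ q : Side V, q ∈ e → q.1 ∈ VC := by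
      intro q hq
      rw [heB, Sym2.mem_iff] at hq
      rcases hq with h | h
      · exact List.mem_map.mpr ⟨u, by rw [hp]; simp, by rw [h]⟩
      · refine List.mem_map.mpr ⟨v, by rw [hp]; simp, ?_⟩
        rw [h]
    have hnt : ∀ v' (s : Bool), v' ∉ VC → (G.deleteEdge e).HasSide v' s →
        (G.deleteEdge e).HasSide v' (!s) := by
      intro v' s hv' hside
      obtain ⟨g, hg, hm⟩ := hside
      exact hasSide_deleteEdge G e hnotip v' (!s) (G.wf g hg.1 _ hm)
        (fun hin => hv' (heVC _ hin))
    have hstart : (G.deleteEdge e).HasSide x.1 (!x.2) := by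
      refine hasSide_deleteEdge G e hnotip x.1 (!x.2) hxG ?_
      intro hin
      rw [heB, Sym2.mem_iff] at hin
      rcases hin with h | h
      · -- (x.1, !x.2) = u
        have humem : u ∈ (x :: R1 : List (Side V)) := by rw [← hR1]; simp
        rcases List.mem_cons.mp humem with h' | h'
        · have hux : (x.1, !x.2) = x := by rw [h, h']
          have h2 := congrArg Prod.snd hux
          simp at h2
        · have huPt : u ∈ pt := by rw [hpt]; exact List.mem_append_left _ h'
          rw [List.map_cons] at hnd
          refine (List.nodup_cons.mp hnd).1 ?_
          refine List.mem_map.mpr ⟨u, huPt, ?_⟩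
          rw [← h]
      · -- (x.1, !x.2) = (v.1, !v.2)
        have hv1 : v.1 = x.1 := by
          have := congrArg Prod.fst h
          simpa using this.symm
        rw [List.map_cons] at hnd
        exact (List.nodup_cons.mp hnd).1 (List.mem_map.mpr ⟨v, hvpt, hv1⟩)
    refine close_up (G.deleteEdge e) hfin VC x hnt hxVC hstart ?_
    intro z hz hzx
    have hz' : z ∈ (L1 ++ [u]).map Prod.fst ∨ z ∈ (v :: L2).map Prod.fst := by
      have hz0 : z ∈ (x :: pt).map Prod.fst := hz
      rw [hpz, List.map_append] at hz0
      exact List.mem_append.mp hz0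
    rcases hz' with hzl | hzr
    · -- `z` lies on the part of the cycloid before `e`
      obtain ⟨q, hq, hq1⟩ := List.mem_map.mp hzl
      obtain ⟨M1, M2, hM⟩ := List.append_of_mem hq
      obtain ⟨M1', hM1⟩ : ∃ M1', M1 = x :: M1' := by
        cases M1 with
        | nil =>
          exfalso
          rw [hM] at hR1
          injection hR1 with h1 h2
          exact hzx (by rw [← hq1, ← h1])
        | cons c M1' =>
          rw [hM] at hR1
          injection hR1 with h1 h2
          exact ⟨M1', by rw [h1]⟩
      have hLuM : L1 ++ [u] = (M1 ++ [q]) ++ M2 := by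
        rw [hM, List.append_assoc]; rfl
      have hdecompP : ∀ m1 (a b : Side V) m2, M1 ++ [q] = m1 ++ a :: b :: m2 →
          ((x :: pt : List (Side V)) = m1 ++ a :: b :: (m2 ++ (M2 ++ v :: L2))) ∧
          (L1 ++ [u] = m1 ++ a :: b :: (m2 ++ M2)) := by
        intro m1 a b m2 hmm
        constructor
        · rw [hpz, hLuM, hmm]
          simp [List.append_assoc]
        · rw [hLuM, hmm, List.append_assoc]
          rfl
      refine ⟨M1 ++ [q], q.2, ?_, ?_, ?_, ?_, ?_⟩
      · rw [hM1]; rfl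
      · rw [List.getLast?_concat]
        congr 1
        rw [← hq1]
      · refine chain'_iff_consec.mpr fun m1 a b m2 hmm => ?_
        obtain ⟨hd1, hd2⟩ := hdecompP m1 a b m2 hmm
        exact ⟨hconsecG _ _ _ _ hd1,
          fun hcon => step_ne_e_left hnd hp m1 a b (m2 ++ M2) hd2
            (by rw [heB] at hcon; exact Set.mem_singleton_iff.mp hcon)⟩
      · have h1 : ((x :: pt : List (Side V)).map Prod.fst) =
            ((M1 ++ [q]).map Prod.fst) ++ ((M2 ++ v :: L2).map Prod.fst) := by
          rw [← List.map_append]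
          congr 1
          rw [hpz, hLuM, List.append_assoc]
        have hnd4 := hnd
        rw [h1] at hnd4
        exact (List.nodup_append.mp hnd4).1
      · intro q' hq'
        have : q' ∈ (x :: pt : List (Side V)) := by
          rw [hpz, hLuM, List.append_assoc]
          exact List.mem_append_left _ hq'
        exact List.mem_map.mpr ⟨q', this, rfl⟩
    · -- `z` lies on the part of the cycloid after `e`
      obtain ⟨q, hq, hq1⟩ := List.mem_map.mp hzr
      obtain ⟨M1, M2, hM⟩ := List.append_of_mem hq
      have hbig : (x :: pt : List (Side V)) = ((L1 ++ [u]) ++ M1) ++ q :: M2 := by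
        rw [hpz, hM]; simp [List.append_assoc]
      have hylast : (q :: M2 : List (Side V)).getLast? = some y := by
        obtain ⟨l', hl'⟩ := getLast?_cons_some q M2
        have hgl : (x :: pt : List (Side V)).getLast? = some l' := by
          rw [hbig]
          exact getLast?_append_some hl'
        rw [hly] at hgl
        injection hgl with hh
        rw [← hh] at hl'
        exact hl'
      refine ⟨x :: flipW (q :: M2), !q.2, rfl, ?_, ?_, ?_, ?_⟩
      · show (([x] : List (Side V)) ++ flipW (q :: M2)).getLast? = some (z, !q.2)
        refine getLast?_append_some ?_
        rw [getLast?_flipW]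
        show some (sflip q) = some (z, !q.2)
        rw [← hq1]
        rfl
      · have hchain_suffix : (q :: M2 : List (Side V)).Chain' (BStep (G.deleteEdge e)) := by
          refine chain'_iff_consec.mpr fun m1 a b m2 hmm => ?_
          have hd1 : (x :: pt : List (Side V)) =
              (((L1 ++ [u]) ++ M1) ++ m1) ++ a :: b :: m2 := by
            rw [hbig, hmm]; simp [List.append_assoc]
          have hd2 : (v :: L2 : List (Side V)) = (M1 ++ m1) ++ a :: b :: m2 := by
            rw [hM, hmm, List.append_assoc]
          exact ⟨hconsecG _ _ _ _ hd1,
            fun hcon => step_ne_e_right hnd hp _ _ _ _ hd2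
              (by rw [heB] at hcon; exact Set.mem_singleton_iff.mp hcon)⟩
        refine List.isChain_cons.mpr ⟨?_, chain'_flipW _ hchain_suffix⟩
        intro yq hyq
        rw [head?_flipW, hylast] at hyq
        simp only [Option.map_some, Option.mem_def, Option.some.injEq] at hyq
        rw [← hyq]
        show s(x, ((sflip y).1, !(sflip y).2)) ∈ (G.deleteEdge e).E
        have hsy : (((sflip y).1, !(sflip y).2) : Side V) = y := by
          simp [sflip]
        rw [hsy, Sym2.eq_swap]
        refine ⟨hyx, fun hcon => ?_⟩
        refine step_ne_closing hnd hhx hly L1 u v L2 hp ?_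
        rw [heB] at hcon
        exact (Set.mem_singleton_iff.mp hcon).symm ▸ rfl
      · have hnd4 := hnd
        rw [hbig, List.map_append] at hnd4
        obtain ⟨hndl, hndr, hdisj⟩ := List.nodup_append'.mp hnd4
        rw [List.map_cons, map_fst_flipW]
        refine List.nodup_cons.mpr ⟨?_, List.nodup_reverse.mpr hndr⟩
        intro hmem
        have hx1 : x.1 ∈ ((L1 ++ [u]) ++ M1).map Prod.fst := by
          refine List.mem_map.mpr ⟨x, ?_, rfl⟩
          rw [hR1]
          exact List.mem_append_left _ List.mem_cons_self
        exact hdisj hx1 (List.mem_reverse.mp hmem)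
      · intro q' hq'
        rcases List.mem_cons.mp hq' with h | h
        · rw [h]; exact hxVC
        · unfold flipW at h
          obtain ⟨q0, hq0, hq0'⟩ := List.mem_map.mp (List.mem_reverse.mp h)
          have hq0mem : q0 ∈ (x :: pt : List (Side V)) := by
            rw [hbig]
            exact List.mem_append_right _ hq0
          have : q'.1 = q0.1 := by rw [← hq0']; rfl
          rw [this]
          exact List.mem_map.mpr ⟨q0, hq0mem, rfl⟩
  · by_cases hA : e = s(y, x)
    · -- `e` is the closing edge of the cycloid
      have heVC : ∀ q : Side V, q ∈ e → q.1 ∈ VC := by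
        intro q hq
        rw [hA, Sym2.mem_iff] at hq
        rcases hq with h | h
        · exact List.mem_map.mpr ⟨y, hyMem, by rw [h]⟩
        · rw [h]; exact hxVC
      have hnt : ∀ v' (s : Bool), v' ∉ VC → (G.deleteEdge e).HasSide v' s →
          (G.deleteEdge e).HasSide v' (!s) := by
        intro v' s hv' hside
        obtain ⟨g, hg, hm⟩ := hside
        exact hasSide_deleteEdge G e hnotip v' (!s) (G.wf g hg.1 _ hm)
          (fun hin => hv' (heVC _ hin))
      have hstart : (G.deleteEdge e).HasSide x.1 (!x.2) := by
        refine hasSide_deleteEdge G e hnotip x.1 (!x.2) hxG ?_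
        intro hin
        rw [hA, Sym2.mem_iff] at hin
        rcases hin with h | h
        · exact hyne h.symm
        · have := congrArg Prod.snd h
          simp at this
      refine close_up (G.deleteEdge e) hfin VC x hnt hxVC hstart ?_
      intro z hz hzx
      obtain ⟨q, hq, hq1⟩ := List.mem_map.mp (show z ∈ (x :: pt).map Prod.fst from hz)
      obtain ⟨M1, M2, hM⟩ := List.append_of_mem hq
      obtain ⟨M1', hM1⟩ : ∃ M1', M1 = x :: M1' := by
        cases M1 with
        | nil =>
          exfalso
          simp only [List.nil_append] at hM
          injection hM with h1 h2
          exact hzx (by rw [← hq1, ← h1])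
        | cons c M1' =>
          injection hM with h1 h2
          exact ⟨M1', by rw [← h1]⟩
      have hdecompP : ∀ m1 (a b : Side V) m2, M1 ++ [q] = m1 ++ a :: b :: m2 →
          (x :: pt : List (Side V)) = m1 ++ a :: b :: (m2 ++ M2) := by
        intro m1 a b m2 hmm
        rw [hM, show M1 ++ q :: M2 = (M1 ++ [q]) ++ M2 by rw [List.append_assoc]; rfl,
          hmm, List.append_assoc]
        rfl
      refine ⟨M1 ++ [q], q.2, ?_, ?_, ?_, ?_, ?_⟩
      · rw [hM1]; rfl
      · rw [List.getLast?_concat]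
        congr 1
        rw [← hq1]
      · refine chain'_iff_consec.mpr fun m1 a b m2 hmm => ?_
        have hd1 := hdecompP m1 a b m2 hmm
        exact ⟨hconsecG _ _ _ _ hd1,
          fun hcon => step_ne_closing hnd hhx hly m1 a b (m2 ++ M2) hd1
            (by rw [hA] at hcon; exact Set.mem_singleton_iff.mp hcon)⟩
      · have h1 : ((x :: pt : List (Side V)).map Prod.fst) =
            ((M1 ++ [q]).map Prod.fst) ++ (M2.map Prod.fst) := by
          rw [← List.map_append]
          congr 1
          rw [hM, List.append_assoc]
          rfl
        have hnd4 := hnd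
        rw [h1] at hnd4
        exact (List.nodup_append.mp hnd4).1
      · intro q' hq'
        have : q' ∈ (x :: pt : List (Side V)) := by
          rw [hM, show M1 ++ q :: M2 = (M1 ++ [q]) ++ M2 by rw [List.append_assoc]; rfl]
          exact List.mem_append_left _ hq'
        exact List.mem_map.mpr ⟨q', this, rfl⟩
    · -- `e` does not lie on the cycloid at all
      refine ⟨x :: pt, by simp, hnd, ?_, x, y, rfl, hly,
        Or.inr ⟨hyx, fun hcon => hA (Set.mem_singleton_iff.mp hcon).symm⟩⟩
      refine chain'_iff_consec.mpr fun m1 a b m2 hmm => ?_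
      exact ⟨hconsecG _ _ _ _ hmm,
        fun hcon => hB ⟨m1, a, b, m2, hmm, (Set.mem_singleton_iff.mp hcon).symm⟩⟩

end Paper
end

section
/- Let G₃ = (A, B, C, E₃) be an undirected tripartite graph (every edge has its endpoints in distinct parts among A, B, C). Construct the bidirected graph G on vertex set A ∪ B ∪ C ∪ {x, y, z}, where x, y, z are three new auxiliary vertices, with the following edges: for every edge {u,v} ∈ E₃, (1) if u ∈ A and v ∈ B, add the bidirected edge {u−, v+}; (2) if u ∈ A and v ∈ C, add {u+, v−}; (3) if u ∈ B and v ∈ C, add {u−, v−}; and additionally add the three bidirected edges {x+, y−}, {y+, z−}, {z+, x−}. Then G has a bidirected feedback edge if and only if G₃ does not contain a triangle (three pairwise adjacent vertices). -/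
/-!
Bidirected graphs.  A vertex-side is a vertex with a sign (`true` = `+`, `false` = `−`);
a bidirected edge is an unordered pair of vertex-sides (an element of `Sym2 (V × Bool)`).
-/

namespace Paper

variable {V : Type}

/-- The reduction from finding triangles in tripartite graphs to
finding bidirected feedback edges.  `R` is the (symmetric) adjacency of a tripartite
graph with parts `A`, `B`, `C`; the bidirected graph `G` is built on
`A ∪ B ∪ C ∪ {x, y, z}` as in the construction (sign `true` = `+`, `false` = `−`).
Then `G` has a bidirected feedback edge (an edge whose removal makes `G` acyclic) iff
the tripartite graph has no triangle. -/
theorem statement_19 (A B C : Set V) (x y z : V) (R : V → V → Prop)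
    (hsymm : ∀ a b, R a b → R b a)
    (htripartite : ∀ a b, R a b →
        ((a ∈ A ∧ b ∈ B) ∨ (a ∈ B ∧ b ∈ A) ∨ (a ∈ A ∧ b ∈ C) ∨
         (a ∈ C ∧ b ∈ A) ∨ (a ∈ B ∧ b ∈ C) ∨ (a ∈ C ∧ b ∈ B)))
    (hAB : Disjoint A B) (hAC : Disjoint A C) (hBC : Disjoint B C)
    (hx : x ∉ A ∪ B ∪ C) (hy : y ∉ A ∪ B ∪ C) (hz : z ∉ A ∪ B ∪ C)
    (hxy : x ≠ y) (hyz : y ≠ z) (hxz : x ≠ z)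
    (G : BDGraph V)
    (hverts : G.verts = A ∪ B ∪ C ∪ {x, y, z})
    (hE : G.E =
        {e | ∃ a b, R a b ∧
            ((a ∈ A ∧ b ∈ B ∧ e = s((a, false), (b, true))) ∨
             (a ∈ A ∧ b ∈ C ∧ e = s((a, true), (b, false))) ∨
             (a ∈ B ∧ b ∈ C ∧ e = s((a, false), (b, false))))} ∪
          {s((x, true), (y, false)), s((y, true), (z, false)), s((z, true), (x, false))}) :
    (∃ e ∈ G.E, ¬ HasCycloid (G.deleteEdge e)) ↔
      ¬ ∃ a b c, R a b ∧ R b c ∧ R a c := by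
  classical
  have dAB : ∀ {v : V}, v ∈ A → v ∈ B → False := fun h1 h2 => Set.disjoint_left.mp hAB h1 h2
  have dAC : ∀ {v : V}, v ∈ A → v ∈ C → False := fun h1 h2 => Set.disjoint_left.mp hAC h1 h2
  have dBC : ∀ {v : V}, v ∈ B → v ∈ C → False := fun h1 h2 => Set.disjoint_left.mp hBC h1 h2
  have memc : ∀ {S : Set V} {u v : V}, u = v → u ∈ S → v ∈ S := by
    intro S u v h hm; rw [← h]; exact hm
  have hRc : ∀ {u v w : V}, u = v → R v w → R u w := by
    intro u v w h hr; rw [h]; exact hr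
  have hRc2 : ∀ {u v w : V}, u = v → R w v → R w u := by
    intro u v w h hr; rw [h]; exact hr
  have hxA : x ∉ A := fun h => hx (by simp [h])
  have hxB : x ∉ B := fun h => hx (by simp [h])
  have hxC : x ∉ C := fun h => hx (by simp [h])
  have hyA : y ∉ A := fun h => hy (by simp [h])
  have hyB : y ∉ B := fun h => hy (by simp [h])
  have hyC : y ∉ C := fun h => hy (by simp [h])
  have hzA : z ∉ A := fun h => hz (by simp [h])
  have hzB : z ∉ B := fun h => hz (by simp [h])
  have hzC : z ∉ C := fun h => hz (by simp [h])
  have ecases : ∀ f ∈ G.E,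
      (∃ a ∈ A, ∃ b ∈ B, R a b ∧ f = s((a, false), (b, true))) ∨
      (∃ a ∈ A, ∃ c ∈ C, R a c ∧ f = s((a, true), (c, false))) ∨
      (∃ b ∈ B, ∃ c ∈ C, R b c ∧ f = s((b, false), (c, false))) ∨
      f = s((x, true), (y, false)) ∨ f = s((y, true), (z, false)) ∨
      f = s((z, true), (x, false)) := by
    intro f hf
    rw [hE, Set.mem_union] at hf
    rcases hf with hf | hf
    · obtain ⟨a, b, hR, hcase⟩ := hf
      rcases hcase with ⟨h1, h2, rfl⟩ | ⟨h1, h2, rfl⟩ | ⟨h1, h2, rfl⟩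
      · exact Or.inl ⟨a, h1, b, h2, hR, rfl⟩
      · exact Or.inr (Or.inl ⟨a, h1, b, h2, hR, rfl⟩)
      · exact Or.inr (Or.inr (Or.inl ⟨a, h1, b, h2, hR, rfl⟩))
    · simp only [Set.mem_insert_iff, Set.mem_singleton_iff] at hf
      rcases hf with rfl | rfl | rfl
      · exact Or.inr (Or.inr (Or.inr (Or.inl rfl)))
      · exact Or.inr (Or.inr (Or.inr (Or.inr (Or.inl rfl))))
      · exact Or.inr (Or.inr (Or.inr (Or.inr (Or.inr rfl))))
  have memXY : s(((x : V), true), (y, false)) ∈ G.E := by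
    rw [hE, Set.mem_union]; exact Or.inr (Set.mem_insert _ _)
  have memYZ : s(((y : V), true), (z, false)) ∈ G.E := by
    rw [hE, Set.mem_union]; exact Or.inr (Set.mem_insert_of_mem _ (Set.mem_insert _ _))
  have memZX : s(((z : V), true), (x, false)) ∈ G.E := by
    rw [hE, Set.mem_union]; exact Or.inr (Set.mem_insert_of_mem _ (Set.mem_insert_of_mem _ rfl))
  have noloop : ∀ f ∈ G.E, ∀ u w : Side V, f = s(u, w) → u.1 = w.1 → False := by
    intro f hf u w hfe h1
    rcases ecases f hf with ⟨a, ha, b, hb, hR, rfl⟩ | ⟨a, ha, c, hc, hR, rfl⟩ |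
      ⟨b, hb, c, hc, hR, rfl⟩ | rfl | rfl | rfl <;>
      rw [Sym2.eq_iff] at hfe <;>
      rcases hfe with ⟨h2, h3⟩ | ⟨h2, h3⟩ <;>
      rw [← h2, ← h3] at h1 <;>
      simp only [Prod.fst] at h1
    all_goals try exact dAB (memc h1 ha) hb
    all_goals try exact dAB ha (memc h1 hb)
    all_goals try exact dAC (memc h1 ha) hc
    all_goals try exact dAC ha (memc h1 hc)
    all_goals try exact dBC (memc h1 hb) hc
    all_goals try exact dBC hb (memc h1 hc)
    all_goals try exact hxy h1
    all_goals try exact hxy h1.symm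
    all_goals try exact hyz h1
    all_goals try exact hyz h1.symm
    all_goals try exact hxz h1
    all_goals try exact hxz h1.symm
  -- The key direction: no triangle implies the edge {x+, y-} is a feedback edge.
  have key : (¬ ∃ a b c, R a b ∧ R b c ∧ R a c) →
      ¬ HasCycloid (G.deleteEdge s(((x : V), true), (y, false))) := by
    intro hno hcyc
    have nodeadC : ∀ f ∈ (G.deleteEdge s(((x : V), true), (y, false))).E,
        ∀ c' ∈ C, ((c' : V), true) ∉ f := by
      rintro f ⟨hfE, hfne⟩ c' hc' hmem
      rcases ecases f hfE with ⟨a, ha, b, hb, hR, rfl⟩ | ⟨a, ha, c, hc, hR, rfl⟩ |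
        ⟨b, hb, c, hc, hR, rfl⟩ | rfl | rfl | rfl <;>
        simp only [Sym2.mem_iff, Prod.mk.injEq, Bool.true_eq_false, Bool.false_eq_true,
          and_true, and_false, false_or, or_false, or_self] at hmem
      all_goals try exact hfne rfl
      all_goals try exact dBC hb (memc hmem hc')
      all_goals try exact dAC ha (memc hmem hc')
      all_goals try exact hyC (memc hmem hc')
      all_goals try exact hzC (memc hmem hc')
    have nodeadX : ∀ f ∈ (G.deleteEdge s(((x : V), true), (y, false))).E,
        ((x : V), true) ∉ f := by
      rintro f ⟨hfE, hfne⟩ hmem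
      rcases ecases f hfE with ⟨a, ha, b, hb, hR, rfl⟩ | ⟨a, ha, c, hc, hR, rfl⟩ |
        ⟨b, hb, c, hc, hR, rfl⟩ | rfl | rfl | rfl <;>
        simp only [Sym2.mem_iff, Prod.mk.injEq, Bool.true_eq_false, Bool.false_eq_true,
          and_true, and_false, false_or, or_false, or_self] at hmem
      all_goals try exact hfne rfl
      all_goals try exact hxB (memc hmem.symm hb)
      all_goals try exact hxA (memc hmem.symm ha)
      all_goals try exact hxy hmem
      all_goals try exact hxz hmem
    have nodeadY : ∀ f ∈ (G.deleteEdge s(((x : V), true), (y, false))).E,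
        ((y : V), false) ∉ f := by
      rintro f ⟨hfE, hfne⟩ hmem
      rcases ecases f hfE with ⟨a, ha, b, hb, hR, rfl⟩ | ⟨a, ha, c, hc, hR, rfl⟩ |
        ⟨b, hb, c, hc, hR, rfl⟩ | rfl | rfl | rfl <;>
        simp only [Sym2.mem_iff, Prod.mk.injEq, Bool.true_eq_false, Bool.false_eq_true,
          and_true, and_false, false_or, or_false, or_self] at hmem
      all_goals try exact hfne rfl
      all_goals try exact hyA (memc hmem.symm ha)
      all_goals try exact hyC (memc hmem.symm hc)
      all_goals try exact hyz hmem
      all_goals try exact hxy hmem.symm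
      all_goals try exact Or.elim hmem (fun h => hyB (memc h.symm hb)) (fun h => hyC (memc h.symm hc))
    have contBfalse : ∀ f ∈ (G.deleteEdge s(((x : V), true), (y, false))).E,
        ∀ b' ∈ B, ((b' : V), false) ∈ f →
        ∃ c' ∈ C, R b' c' ∧ f = s(((b' : V), false), (c', false)) := by
      rintro f ⟨hfE, hfne⟩ b' hb' hmem
      rcases ecases f hfE with ⟨a, ha, b, hb, hR, rfl⟩ | ⟨a, ha, c, hc, hR, rfl⟩ |
        ⟨b, hb, c, hc, hR, rfl⟩ | rfl | rfl | rfl <;>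
        simp only [Sym2.mem_iff, Prod.mk.injEq, Bool.true_eq_false, Bool.false_eq_true,
          and_true, and_false, false_or, or_false, or_self] at hmem
      · exact (dAB ha (hmem ▸ hb')).elim
      · exact (dBC (hmem ▸ hb') hc).elim
      · rcases hmem with hmem | hmem
        · exact ⟨c, hc, by rw [hmem]; exact hR, by rw [hmem]⟩
        · exact (dBC hb' (hmem.symm ▸ hc)).elim
      · exact (hfne rfl).elim
      · exact (hzB (hmem ▸ hb')).elim
      · exact (hxB (hmem ▸ hb')).elim
    have contAtrue : ∀ f ∈ (G.deleteEdge s(((x : V), true), (y, false))).E,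
        ∀ a' ∈ A, ((a' : V), true) ∈ f →
        ∃ c' ∈ C, R a' c' ∧ f = s(((a' : V), true), (c', false)) := by
      rintro f ⟨hfE, hfne⟩ a' ha' hmem
      rcases ecases f hfE with ⟨a, ha, b, hb, hR, rfl⟩ | ⟨a, ha, c, hc, hR, rfl⟩ |
        ⟨b, hb, c, hc, hR, rfl⟩ | rfl | rfl | rfl <;>
        simp only [Sym2.mem_iff, Prod.mk.injEq, Bool.true_eq_false, Bool.false_eq_true,
          and_true, and_false, false_or, or_false, or_self] at hmem
      · exact (dAB ha' (hmem.symm ▸ hb)).elim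
      · exact ⟨c, hc, by rw [hmem]; exact hR, by rw [hmem]⟩
      · exact (hfne rfl).elim
      · exact (hyA (hmem ▸ ha')).elim
      · exact (hzA (hmem ▸ ha')).elim
    have contAfalse : ∀ f ∈ (G.deleteEdge s(((x : V), true), (y, false))).E,
        ∀ a' ∈ A, ((a' : V), false) ∈ f →
        ∃ b' ∈ B, R a' b' ∧ f = s(((a' : V), false), (b', true)) := by
      rintro f ⟨hfE, hfne⟩ a' ha' hmem
      rcases ecases f hfE with ⟨a, ha, b, hb, hR, rfl⟩ | ⟨a, ha, c, hc, hR, rfl⟩ |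
        ⟨b, hb, c, hc, hR, rfl⟩ | rfl | rfl | rfl <;>
        simp only [Sym2.mem_iff, Prod.mk.injEq, Bool.true_eq_false, Bool.false_eq_true,
          and_true, and_false, false_or, or_false, or_self] at hmem
      · exact ⟨b, hb, by rw [hmem]; exact hR, by rw [hmem]⟩
      · exact (dAC ha' (hmem.symm ▸ hc)).elim
      · rcases hmem with hmem | hmem
        · exact (dAB ha' (hmem.symm ▸ hb)).elim
        · exact (dAC ha' (hmem.symm ▸ hc)).elim
      · exact (hfne rfl).elim
      · exact (hzA (hmem ▸ ha')).elim
      · exact (hxA (hmem ▸ ha')).elim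
    have contBtrue : ∀ f ∈ (G.deleteEdge s(((x : V), true), (y, false))).E,
        ∀ b' ∈ B, ((b' : V), true) ∈ f →
        ∃ a' ∈ A, R a' b' ∧ f = s(((a' : V), false), (b', true)) := by
      rintro f ⟨hfE, hfne⟩ b' hb' hmem
      rcases ecases f hfE with ⟨a, ha, b, hb, hR, rfl⟩ | ⟨a, ha, c, hc, hR, rfl⟩ |
        ⟨b, hb, c, hc, hR, rfl⟩ | rfl | rfl | rfl <;>
        simp only [Sym2.mem_iff, Prod.mk.injEq, Bool.true_eq_false, Bool.false_eq_true,
          and_true, and_false, false_or, or_false, or_self] at hmem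
      · exact ⟨a, ha, by rw [hmem]; exact hR, by rw [hmem]⟩
      · exact (dAB (hmem.symm ▸ ha) hb').elim
      · exact (hfne rfl).elim
      · exact (hyB (hmem ▸ hb')).elim
      · exact (hzB (hmem ▸ hb')).elim
    have contZtrue : ∀ f ∈ (G.deleteEdge s(((x : V), true), (y, false))).E,
        ((z : V), true) ∈ f → f = s(((z : V), true), (x, false)) := by
      rintro f ⟨hfE, hfne⟩ hmem
      rcases ecases f hfE with ⟨a, ha, b, hb, hR, rfl⟩ | ⟨a, ha, c, hc, hR, rfl⟩ |
        ⟨b, hb, c, hc, hR, rfl⟩ | rfl | rfl | rfl <;>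
        simp only [Sym2.mem_iff, Prod.mk.injEq, Bool.true_eq_false, Bool.false_eq_true,
          and_true, and_false, false_or, or_false, or_self] at hmem
      · exact (hzB (hmem.symm ▸ hb)).elim
      · exact (hzA (hmem.symm ▸ ha)).elim
      · exact (hfne rfl).elim
      · exact (hyz hmem.symm).elim
      · rfl
    have contZfalse : ∀ f ∈ (G.deleteEdge s(((x : V), true), (y, false))).E,
        ((z : V), false) ∈ f → f = s(((y : V), true), (z, false)) := by
      rintro f ⟨hfE, hfne⟩ hmem
      rcases ecases f hfE with ⟨a, ha, b, hb, hR, rfl⟩ | ⟨a, ha, c, hc, hR, rfl⟩ |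
        ⟨b, hb, c, hc, hR, rfl⟩ | rfl | rfl | rfl <;>
        simp only [Sym2.mem_iff, Prod.mk.injEq, Bool.true_eq_false, Bool.false_eq_true,
          and_true, and_false, false_or, or_false, or_self] at hmem
      · exact (hzA (hmem.symm ▸ ha)).elim
      · exact (hzC (hmem.symm ▸ hc)).elim
      · rcases hmem with hmem | hmem
        · exact (hzB (hmem.symm ▸ hb)).elim
        · exact (hzC (hmem.symm ▸ hc)).elim
      · exact (hfne rfl).elim
      · rfl
      · exact (hxz hmem.symm).elim
    have step : ∀ st tt : Side V, BStep (G.deleteEdge s(((x : V), true), (y, false))) st tt →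
        (∃ f ∈ (G.deleteEdge s(((x : V), true), (y, false))).E, tt ∈ f) →
        (∃ a ∈ A, ∃ b ∈ B, R a b ∧ st = ((a : V), false) ∧ tt = ((b : V), false)) ∨
        (∃ a ∈ A, ∃ b ∈ B, R a b ∧ st = ((b : V), true) ∧ tt = ((a : V), true)) ∨
        (∃ a ∈ A, ∃ c ∈ C, R a c ∧ st = ((c : V), false) ∧ tt = ((a : V), false)) ∨
        (∃ b ∈ B, ∃ c ∈ C, R b c ∧ st = ((c : V), false) ∧ tt = ((b : V), true)) ∨
        (st = ((y : V), true) ∧ tt = ((z : V), true)) ∨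
        (st = ((x : V), false) ∧ tt = ((z : V), false)) := by
      rintro ⟨sv, sb⟩ ⟨tv, tb⟩ h htm
      have h' : s(((sv : V), sb), (tv, !tb)) ∈
          (G.deleteEdge s(((x : V), true), (y, false))).E := h
      obtain ⟨hE1, hE2⟩ := h'
      cases tb
      all_goals simp only [Bool.not_true, Bool.not_false] at hE1 hE2
      all_goals rcases ecases _ hE1 with ⟨a, ha, b, hb, hR, heq⟩ | ⟨a, ha, c, hc, hR, heq⟩ |
        ⟨b, hb, c, hc, hR, heq⟩ | heq | heq | heq
      all_goals rw [Sym2.eq_iff] at heq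
      all_goals rcases heq with ⟨h1, h2⟩ | ⟨h1, h2⟩
      all_goals simp only [Prod.mk.injEq, Bool.true_eq_false, Bool.false_eq_true,
        and_false, false_and] at h1 h2
      all_goals obtain ⟨rfl, rfl⟩ := h1
      all_goals obtain ⟨rfl, -⟩ := h2
      all_goals try exact Or.inl ⟨_, ha, _, hb, hR, rfl, rfl⟩
      all_goals try exact Or.inr (Or.inl ⟨_, ha, _, hb, hR, rfl, rfl⟩)
      all_goals try exact Or.inr (Or.inr (Or.inl ⟨_, ha, _, hc, hR, rfl, rfl⟩))
      all_goals try exact Or.inr (Or.inr (Or.inr (Or.inl ⟨_, hb, _, hc, hR, rfl, rfl⟩)))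
      all_goals try exact Or.inr (Or.inr (Or.inr (Or.inr (Or.inl ⟨rfl, rfl⟩))))
      all_goals try exact Or.inr (Or.inr (Or.inr (Or.inr (Or.inr ⟨rfl, rfl⟩))))
      all_goals try exact (hE2 rfl).elim
      all_goals try exact (hE2 Sym2.eq_swap).elim
      all_goals try (obtain ⟨f, hfD, hmf⟩ := htm; exact (nodeadC f hfD _ hc hmf).elim)
      all_goals try (obtain ⟨f, hfD, hmf⟩ := htm; exact (nodeadX f hfD hmf).elim)
      all_goals try (obtain ⟨f, hfD, hmf⟩ := htm; exact (nodeadY f hfD hmf).elim)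
    have step2 : ∀ st tt ut : Side V,
        BStep (G.deleteEdge s(((x : V), true), (y, false))) st tt →
        BStep (G.deleteEdge s(((x : V), true), (y, false))) tt ut →
        (∃ f ∈ (G.deleteEdge s(((x : V), true), (y, false))).E, tt ∈ f) →
        (∃ f ∈ (G.deleteEdge s(((x : V), true), (y, false))).E, ut ∈ f) →
        (∃ c' ∈ C, ∃ a ∈ A, ∃ b ∈ B, R a c' ∧ R a b ∧ st = ((c' : V), false) ∧
          tt = ((a : V), false) ∧ ut = ((b : V), false)) ∨
        (∃ c' ∈ C, ∃ b ∈ B, ∃ a ∈ A, R b c' ∧ R a b ∧ st = ((c' : V), false) ∧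
          tt = ((b : V), true) ∧ ut = ((a : V), true)) := by
      intro st tt ut h1 h2 htm hum
      rcases step st tt h1 htm with ⟨a1, ha1, b1, hb1, hR1, hs1, ht1⟩ |
        ⟨a1, ha1, b1, hb1, hR1, hs1, ht1⟩ | ⟨a1, ha1, c1, hc1, hR1, hs1, ht1⟩ |
        ⟨b1, hb1, c1, hc1, hR1, hs1, ht1⟩ | ⟨hs1, ht1⟩ | ⟨hs1, ht1⟩ <;>
      rcases step tt ut h2 hum with ⟨a2, ha2, b2, hb2, hR2, hs2, ht2⟩ |
        ⟨a2, ha2, b2, hb2, hR2, hs2, ht2⟩ | ⟨a2, ha2, c2, hc2, hR2, hs2, ht2⟩ |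
        ⟨b2, hb2, c2, hc2, hR2, hs2, ht2⟩ | ⟨hs2, ht2⟩ | ⟨hs2, ht2⟩
      all_goals have hm := ht1.symm.trans hs2
      all_goals simp only [Prod.mk.injEq, Bool.true_eq_false, Bool.false_eq_true, and_false,
        false_and, and_true] at hm
      all_goals try exact Or.inl ⟨c1, hc1, a1, ha1, b2, hb2, hR1, hRc hm hR2, hs1, ht1, ht2⟩
      all_goals try exact Or.inr ⟨c1, hc1, b1, hb1, a2, ha2, hR1, hRc2 hm hR2, hs1, ht1, ht2⟩
      all_goals try exact (dAB ha2 (memc hm hb1)).elim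
      all_goals try exact (dBC (memc hm hb1) hc2).elim
      all_goals try exact (hxB (memc hm hb1)).elim
      all_goals try exact (hyB (memc hm hb1)).elim
      all_goals try exact (dAB (memc hm ha1) hb2).elim
      all_goals try exact (dAC (memc hm ha1) hc2).elim
      all_goals try exact (hyA (memc hm ha1)).elim
      all_goals try exact (hxA (memc hm ha1)).elim
      all_goals try exact (hzB (memc hm.symm hb2)).elim
      all_goals try exact (hzA (memc hm.symm ha2)).elim
      all_goals try exact (hzC (memc hm.symm hc2)).elim
      all_goals try exact (hyz hm.symm).elim
      all_goals try exact (hxz hm.symm).elim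
    obtain ⟨p, hpne, -, hch, x₀, y₀, hh, hl, hcl⟩ := hcyc
    rcases p with - | ⟨s₁, p₁⟩
    · exact hpne rfl
    rw [List.head?_cons] at hh
    obtain rfl : s₁ = x₀ := Option.some.inj hh
    rcases p₁ with - | ⟨s₂, p₂⟩
    · -- one vertex: a loop, impossible
      rw [List.getLast?_singleton] at hl
      obtain rfl : s₁ = y₀ := Option.some.inj hl
      rcases hcl with h | h
      · exact noloop _ h.1 _ _ rfl rfl
      · exact noloop _ h.1 _ _ rfl rfl
    rcases p₂ with - | ⟨s₃, p₃⟩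
    · -- two vertices
      rw [List.getLast?_cons_cons, List.getLast?_singleton] at hl
      obtain rfl : s₂ = y₀ := Option.some.inj hl
      rw [List.Chain', List.isChain_cons_cons] at hch
      obtain ⟨h₁₂, -⟩ := hch
      have nd₂ : ∃ f ∈ (G.deleteEdge s(((x : V), true), (y, false))).E, s₂ ∈ f := by
        rcases hcl with h | h
        · exact ⟨_, h, Sym2.mem_mk_left _ _⟩
        · exact ⟨_, h, Sym2.mem_mk_left _ _⟩
      rcases step s₁ s₂ h₁₂ nd₂ with ⟨a1, ha1, b1, hb1, hR1, rfl, rfl⟩ |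
        ⟨a1, ha1, b1, hb1, hR1, rfl, rfl⟩ | ⟨a1, ha1, c1, hc1, hR1, rfl, rfl⟩ |
        ⟨b1, hb1, c1, hc1, hR1, rfl, rfl⟩ | ⟨rfl, rfl⟩ | ⟨rfl, rfl⟩
      · obtain ⟨σc, hg⟩ : ∃ σ : Bool,
            s(((b1 : V), false), (a1, σ)) ∈ (G.deleteEdge s(((x : V), true), (y, false))).E := by
          rcases hcl with h | h
          · exact ⟨_, h⟩
          · exact ⟨_, h⟩
        obtain ⟨c', hc', hR', hfeq⟩ := contBfalse _ hg b1 hb1 (Sym2.mem_mk_left _ _)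
        rw [Sym2.eq_iff] at hfeq
        rcases hfeq with ⟨-, h2⟩ | ⟨h1, -⟩
        · simp only [Prod.mk.injEq] at h2
          exact dAC ha1 (h2.1.symm ▸ hc')
        · simp only [Prod.mk.injEq] at h1
          exact dBC hb1 (h1.1.symm ▸ hc')
      · obtain ⟨σc, hg⟩ : ∃ σ : Bool,
            s(((a1 : V), true), (b1, σ)) ∈ (G.deleteEdge s(((x : V), true), (y, false))).E := by
          rcases hcl with h | h
          · exact ⟨_, h⟩
          · exact ⟨_, h⟩
        obtain ⟨c', hc', hR', hfeq⟩ := contAtrue _ hg a1 ha1 (Sym2.mem_mk_left _ _)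
        rw [Sym2.eq_iff] at hfeq
        rcases hfeq with ⟨-, h2⟩ | ⟨h1, -⟩
        · simp only [Prod.mk.injEq] at h2
          exact dBC hb1 (h2.1.symm ▸ hc')
        · simp only [Prod.mk.injEq, Bool.true_eq_false, and_false] at h1
      · obtain ⟨σc, hg⟩ : ∃ σ : Bool,
            s(((a1 : V), false), (c1, σ)) ∈ (G.deleteEdge s(((x : V), true), (y, false))).E := by
          rcases hcl with h | h
          · exact ⟨_, h⟩
          · exact ⟨_, h⟩
        obtain ⟨b', hb', hR', hfeq⟩ := contAfalse _ hg a1 ha1 (Sym2.mem_mk_left _ _)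
        rw [Sym2.eq_iff] at hfeq
        rcases hfeq with ⟨-, h2⟩ | ⟨h1, -⟩
        · simp only [Prod.mk.injEq] at h2
          exact dBC (h2.1.symm ▸ hb') hc1
        · simp only [Prod.mk.injEq, Bool.false_eq_true, and_false] at h1
      · obtain ⟨σc, hg⟩ : ∃ σ : Bool,
            s(((b1 : V), true), (c1, σ)) ∈ (G.deleteEdge s(((x : V), true), (y, false))).E := by
          rcases hcl with h | h
          · exact ⟨_, h⟩
          · exact ⟨_, h⟩
        obtain ⟨a', ha', hR', hfeq⟩ := contBtrue _ hg b1 hb1 (Sym2.mem_mk_left _ _)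
        rw [Sym2.eq_iff] at hfeq
        rcases hfeq with ⟨h1, -⟩ | ⟨-, h2⟩
        · simp only [Prod.mk.injEq, Bool.true_eq_false, and_false] at h1
        · simp only [Prod.mk.injEq] at h2
          exact dAC (h2.1.symm ▸ ha') hc1
      · obtain ⟨σc, hg⟩ : ∃ σ : Bool,
            s(((z : V), true), (y, σ)) ∈ (G.deleteEdge s(((x : V), true), (y, false))).E := by
          rcases hcl with h | h
          · exact ⟨_, h⟩
          · exact ⟨_, h⟩
        have hfeq := contZtrue _ hg (Sym2.mem_mk_left _ _)
        rw [Sym2.eq_iff] at hfeq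
        rcases hfeq with ⟨-, h2⟩ | ⟨h1, -⟩
        · simp only [Prod.mk.injEq] at h2
          exact hxy h2.1.symm
        · simp only [Prod.mk.injEq, Bool.true_eq_false, and_false] at h1
      · obtain ⟨σc, hg⟩ : ∃ σ : Bool,
            s(((z : V), false), (x, σ)) ∈ (G.deleteEdge s(((x : V), true), (y, false))).E := by
          rcases hcl with h | h
          · exact ⟨_, h⟩
          · exact ⟨_, h⟩
        have hfeq := contZfalse _ hg (Sym2.mem_mk_left _ _)
        rw [Sym2.eq_iff] at hfeq
        rcases hfeq with ⟨h1, -⟩ | ⟨-, h2⟩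
        · simp only [Prod.mk.injEq, Bool.false_eq_true, and_false] at h1
        · simp only [Prod.mk.injEq] at h2
          exact hxy h2.1
    rcases p₃ with - | ⟨s₄, rest⟩
    · -- three vertices: must be a triangle
      rw [List.getLast?_cons_cons, List.getLast?_cons_cons, List.getLast?_singleton] at hl
      obtain rfl : s₃ = y₀ := Option.some.inj hl
      rw [List.Chain', List.isChain_cons_cons, List.isChain_cons_cons] at hch
      obtain ⟨h₁₂, h₂₃, -⟩ := hch
      have nd₂ : ∃ f ∈ (G.deleteEdge s(((x : V), true), (y, false))).E, s₂ ∈ f :=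
        ⟨_, h₂₃, Sym2.mem_mk_left _ _⟩
      have nd₃ : ∃ f ∈ (G.deleteEdge s(((x : V), true), (y, false))).E, s₃ ∈ f := by
        rcases hcl with h | h
        · exact ⟨_, h, Sym2.mem_mk_left _ _⟩
        · exact ⟨_, h, Sym2.mem_mk_left _ _⟩
      rcases step2 s₁ s₂ s₃ h₁₂ h₂₃ nd₂ nd₃ with
        ⟨c1, hc1, a1, ha1, b1, hb1, hRac, hRab, rfl, rfl, rfl⟩ |
        ⟨c1, hc1, b1, hb1, a1, ha1, hRbc, hRab, rfl, rfl, rfl⟩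
      · obtain ⟨σc, hg⟩ : ∃ σ : Bool,
            s(((b1 : V), false), (c1, σ)) ∈ (G.deleteEdge s(((x : V), true), (y, false))).E := by
          rcases hcl with h | h
          · exact ⟨_, h⟩
          · exact ⟨_, h⟩
        obtain ⟨c', hc', hR', hfeq⟩ := contBfalse _ hg b1 hb1 (Sym2.mem_mk_left _ _)
        rw [Sym2.eq_iff] at hfeq
        rcases hfeq with ⟨-, h2⟩ | ⟨h1, -⟩
        · simp only [Prod.mk.injEq] at h2
          exact hno ⟨a1, b1, c1, hRab, h2.1.symm ▸ hR', hRac⟩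
        · simp only [Prod.mk.injEq] at h1
          exact dBC hb1 (h1.1.symm ▸ hc')
      · obtain ⟨σc, hg⟩ : ∃ σ : Bool,
            s(((a1 : V), true), (c1, σ)) ∈ (G.deleteEdge s(((x : V), true), (y, false))).E := by
          rcases hcl with h | h
          · exact ⟨_, h⟩
          · exact ⟨_, h⟩
        obtain ⟨c', hc', hR', hfeq⟩ := contAtrue _ hg a1 ha1 (Sym2.mem_mk_left _ _)
        rw [Sym2.eq_iff] at hfeq
        rcases hfeq with ⟨-, h2⟩ | ⟨h1, -⟩
        · simp only [Prod.mk.injEq] at h2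
          exact hno ⟨a1, b1, c1, hRab, hRbc, h2.1.symm ▸ hR'⟩
        · simp only [Prod.mk.injEq, Bool.true_eq_false, and_false] at h1
    · -- four or more vertices: impossible
      rw [List.Chain', List.isChain_cons_cons, List.isChain_cons_cons, List.isChain_cons_cons] at hch
      obtain ⟨h₁₂, h₂₃, h₃₄, hch'⟩ := hch
      have nd₂ : ∃ f ∈ (G.deleteEdge s(((x : V), true), (y, false))).E, s₂ ∈ f :=
        ⟨_, h₂₃, Sym2.mem_mk_left _ _⟩
      have nd₃ : ∃ f ∈ (G.deleteEdge s(((x : V), true), (y, false))).E, s₃ ∈ f :=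
        ⟨_, h₃₄, Sym2.mem_mk_left _ _⟩
      have nd₄ : ∃ f ∈ (G.deleteEdge s(((x : V), true), (y, false))).E, s₄ ∈ f := by
        rcases rest with - | ⟨s₅, rest'⟩
        · rw [List.getLast?_cons_cons, List.getLast?_cons_cons, List.getLast?_cons_cons,
            List.getLast?_singleton] at hl
          obtain rfl : s₄ = y₀ := Option.some.inj hl
          rcases hcl with h | h
          · exact ⟨_, h, Sym2.mem_mk_left _ _⟩
          · exact ⟨_, h, Sym2.mem_mk_left _ _⟩
        · rw [List.isChain_cons_cons] at hch'
          exact ⟨_, hch'.1, Sym2.mem_mk_left _ _⟩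
      rcases step2 s₁ s₂ s₃ h₁₂ h₂₃ nd₂ nd₃ with
        ⟨c1, hc1, a1, ha1, b1, hb1, hRac, hRab, rfl, rfl, rfl⟩ |
        ⟨c1, hc1, b1, hb1, a1, ha1, hRbc, hRab, rfl, rfl, rfl⟩
      · have h34' : s(((b1 : V), false), (s₄.1, !s₄.2)) ∈
            (G.deleteEdge s(((x : V), true), (y, false))).E := h₃₄
        obtain ⟨c', hc', hR', hfeq⟩ := contBfalse _ h34' b1 hb1 (Sym2.mem_mk_left _ _)
        rw [Sym2.eq_iff] at hfeq
        rcases hfeq with ⟨-, h2⟩ | ⟨h1, -⟩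
        · have e1 : s₄.1 = c' := congrArg Prod.fst h2
          have e2 : (!s₄.2) = false := congrArg Prod.snd h2
          have e2' : s₄.2 = true := by simpa using e2
          have hs4 : s₄ = ((c' : V), true) := by rw [← e1, ← e2']
          obtain ⟨f, hf, hmf⟩ := nd₄
          rw [hs4] at hmf
          exact nodeadC f hf c' hc' hmf
        · simp only [Prod.mk.injEq] at h1
          exact dBC hb1 (h1.1.symm ▸ hc')
      · have h34' : s(((a1 : V), true), (s₄.1, !s₄.2)) ∈
            (G.deleteEdge s(((x : V), true), (y, false))).E := h₃₄
        obtain ⟨c', hc', hR', hfeq⟩ := contAtrue _ h34' a1 ha1 (Sym2.mem_mk_left _ _)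
        rw [Sym2.eq_iff] at hfeq
        rcases hfeq with ⟨-, h2⟩ | ⟨h1, -⟩
        · have e1 : s₄.1 = c' := congrArg Prod.fst h2
          have e2 : (!s₄.2) = false := congrArg Prod.snd h2
          have e2' : s₄.2 = true := by simpa using e2
          have hs4 : s₄ = ((c' : V), true) := by rw [← e1, ← e2']
          obtain ⟨f, hf, hmf⟩ := nd₄
          rw [hs4] at hmf
          exact nodeadC f hf c' hc' hmf
        · simp only [Prod.mk.injEq, Bool.true_eq_false, and_false] at h1
  constructor
  · -- a feedback edge implies there is no triangle
    rintro ⟨e, heE, hnc⟩ ⟨a0, b0, c0, Rab, Rbc, Rac⟩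
    apply hnc
    have hsame : ∀ u v, R u v → ((u ∈ A → v ∈ A → False) ∧ (u ∈ B → v ∈ B → False) ∧
        (u ∈ C → v ∈ C → False)) := by
      intro u v h
      rcases htripartite u v h with ⟨h1, h2⟩ | ⟨h1, h2⟩ | ⟨h1, h2⟩ | ⟨h1, h2⟩ |
        ⟨h1, h2⟩ | ⟨h1, h2⟩ <;>
        refine ⟨fun hu hv => ?_, fun hu hv => ?_, fun hu hv => ?_⟩
      all_goals try exact dAB hu h1
      all_goals try exact dAB hv h2
      all_goals try exact dAB hu h2
      all_goals try exact dAB hv h1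
      all_goals try exact dAB h1 hu
      all_goals try exact dAB h2 hv
      all_goals try exact dAB h2 hu
      all_goals try exact dAB h1 hv
      all_goals try exact dAC hu h1
      all_goals try exact dAC hv h2
      all_goals try exact dAC hu h2
      all_goals try exact dAC hv h1
      all_goals try exact dAC h1 hu
      all_goals try exact dAC h2 hv
      all_goals try exact dAC h2 hu
      all_goals try exact dAC h1 hv
      all_goals try exact dBC hu h1
      all_goals try exact dBC hv h2
      all_goals try exact dBC hu h2
      all_goals try exact dBC hv h1
      all_goals try exact dBC h1 hu
      all_goals try exact dBC h2 hv
      all_goals try exact dBC h2 hu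
      all_goals try exact dBC h1 hv
    have hpart : ∀ u v, R u v → (u ∈ A ∨ u ∈ B ∨ u ∈ C) := by
      intro u v h
      rcases htripartite u v h with ⟨h1, -⟩ | ⟨h1, -⟩ | ⟨h1, -⟩ | ⟨h1, -⟩ |
        ⟨h1, -⟩ | ⟨h1, -⟩ <;> tauto
    obtain ⟨a, ha, b, hb, c, hc, hRab, hRbc, hRac⟩ :
        ∃ a ∈ A, ∃ b ∈ B, ∃ c ∈ C, R a b ∧ R b c ∧ R a c := by
      rcases hpart a0 b0 Rab with ha | ha | ha <;>
        rcases hpart b0 a0 (hsymm _ _ Rab) with hb | hb | hb <;>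
        rcases hpart c0 a0 (hsymm _ _ Rac) with hc | hc | hc
      all_goals try exact ⟨a0, ha, b0, hb, c0, hc, Rab, Rbc, Rac⟩
      all_goals try exact ⟨a0, ha, c0, hc, b0, hb, Rac, hsymm _ _ Rbc, Rab⟩
      all_goals try exact ⟨b0, hb, a0, ha, c0, hc, hsymm _ _ Rab, Rac, Rbc⟩
      all_goals try exact ⟨c0, hc, a0, ha, b0, hb, hsymm _ _ Rac, Rab, hsymm _ _ Rbc⟩
      all_goals try exact ⟨b0, hb, c0, hc, a0, ha, Rbc, hsymm _ _ Rac, hsymm _ _ Rab⟩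
      all_goals try exact ⟨c0, hc, b0, hb, a0, ha, hsymm _ _ Rbc, hsymm _ _ Rab, hsymm _ _ Rac⟩
      all_goals try exact ((hsame a0 b0 Rab).1 ha hb).elim
      all_goals try exact ((hsame a0 b0 Rab).2.1 ha hb).elim
      all_goals try exact ((hsame a0 b0 Rab).2.2 ha hb).elim
      all_goals try exact ((hsame b0 c0 Rbc).1 hb hc).elim
      all_goals try exact ((hsame b0 c0 Rbc).2.1 hb hc).elim
      all_goals try exact ((hsame b0 c0 Rbc).2.2 hb hc).elim
      all_goals try exact ((hsame a0 c0 Rac).1 ha hc).elim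
      all_goals try exact ((hsame a0 c0 Rac).2.1 ha hc).elim
      all_goals try exact ((hsame a0 c0 Rac).2.2 ha hc).elim
    by_cases hcase : e = s(((x : V), true), (y, false)) ∨ e = s(((y : V), true), (z, false)) ∨
        e = s(((z : V), true), (x, false))
    · -- e is one of the x,y,z edges: use the triangle cycloid on a,b,c
      have hne3 : ∀ (u w : V) (σ τ : Bool), u ∈ A ∪ B ∪ C → w ∈ A ∪ B ∪ C →
          s((u, σ), (w, τ)) ≠ e := by
        intro u w σ τ hu hw h
        rcases hcase with rfl | rfl | rfl <;> rw [Sym2.eq_iff] at h <;>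
          rcases h with ⟨h1, -⟩ | ⟨h1, -⟩
        all_goals injection h1 with ha' _
        all_goals try exact hx (memc ha' hu)
        all_goals try exact hy (memc ha' hu)
        all_goals try exact hz (memc ha' hu)
      have hcb : c ≠ b := fun h => dBC (h.symm ▸ hb) hc
      have hca : c ≠ a := fun h => dAC (h.symm ▸ ha) hc
      have hba : b ≠ a := fun h => dAB (h.symm ▸ ha) hb
      have eBC : s(((c : V), false), (b, false)) ∈ G.E := by
        rw [hE, Set.mem_union]
        exact Or.inl ⟨b, c, hRbc, Or.inr (Or.inr ⟨hb, hc, Sym2.eq_swap⟩)⟩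
      have eAB : s(((b : V), true), (a, false)) ∈ G.E := by
        rw [hE, Set.mem_union]
        exact Or.inl ⟨a, b, hRab, Or.inl ⟨ha, hb, Sym2.eq_swap⟩⟩
      have eAC : s(((a : V), true), (c, false)) ∈ G.E := by
        rw [hE, Set.mem_union]
        exact Or.inl ⟨a, c, hRac, Or.inr (Or.inl ⟨ha, hc, rfl⟩)⟩
      refine ⟨[((c : V), false), (b, true), (a, true)], by simp, by simp [hcb, hca, hba],
        ?_, ((c : V), false), ((a : V), true), rfl, rfl, Or.inr ⟨eAC, ?_⟩⟩
      · rw [List.Chain', List.isChain_cons_cons, List.isChain_cons_cons]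
        refine ⟨⟨eBC, ?_⟩, ⟨eAB, ?_⟩, List.isChain_singleton _⟩
        · exact fun h => hne3 c b false false (Or.inr hc) (Or.inl (Or.inr hb)) h
        · exact fun h => hne3 b a true false (Or.inl (Or.inr hb)) (Or.inl (Or.inl ha)) h
      · exact fun h => hne3 a c true false (Or.inl (Or.inl ha)) (Or.inr hc) h
    · -- e is not one of the x,y,z edges: use the x,y,z cycloid
      push_neg at hcase
      obtain ⟨hne1, hne2, hne3'⟩ := hcase
      refine ⟨[((x : V), true), (y, true), (z, true)], by simp, by simp [hxy, hyz, hxz],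
        ?_, ((x : V), true), ((z : V), true), rfl, rfl, Or.inl ⟨memZX, fun h => hne3' h.symm⟩⟩
      rw [List.Chain', List.isChain_cons_cons, List.isChain_cons_cons]
      exact ⟨⟨memXY, fun h => hne1 h.symm⟩, ⟨memYZ, fun h => hne2 h.symm⟩,
        List.isChain_singleton _⟩
  · intro hno
    exact ⟨_, memXY, key hno⟩


end Paper
end
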